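/- Let k be even and let H be a connected k-uniform hypergraph with at least one edge that is not odd-bipartite. If γ : W → ℂ with |γ_w| = 1 for all w is such that L(H) is obtained from Q(H) by the diagonal similarity γ, then γ is necessarily non-real, i.e., γ_w ∉ ℝ for some w ∈ W. The same conclusion holds if −A(H) is obtained from A(H) by the diagonal similarity γ. -/

import Mathlib

open scoped BigOperators

attribute [local instance] Classical.propDecidable

/-- The degree of a vertex `w` in the hypergraph with edge set `E`. -/
def hypDegree {W : Type*} [DecidableEq W] (E : Finset (Finset W)) (w : W) : ℕ :=
  (E.filter fun e => w ∈ e).card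

/-- Entry of the adjacency tensor of the hypergraph with edge set `E` at the tuple `t`. -/
noncomputable def adjEnt {W : Type*} [Fintype W] [DecidableEq W] (k : ℕ)
    (E : Finset (Finset W)) (t : Fin k → W) : ℂ :=
  if Function.Injective t ∧ Finset.image t Finset.univ ∈ E then
    ((Nat.factorial (k - 1) : ℂ))⁻¹
  else 0

/-- Entry of the degree diagonal tensor of the hypergraph with edge set `E` at the tuple
`t`. -/
noncomputable def diagEnt {W : Type*} [Fintype W] [DecidableEq W] (k : ℕ)
    (E : Finset (Finset W)) (t : Fin k → W) : ℂ :=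
  if h : ∃ w : W, ∀ i, t i = w then (hypDegree E h.choose : ℂ) else 0

lemma pm_of_real_unit (z : ℂ) (habs : ‖z‖ = 1) (him : z.im = 0) :
    z = 1 ∨ z = -1 := by
  have hz : z = (z.re : ℂ) := Complex.ext rfl (by simp [him])
  rw [hz, Complex.norm_real, Real.norm_eq_abs] at habs
  rcases (abs_eq zero_le_one).mp habs with h | h
  · left; rw [hz, h]; norm_num
  · right; rw [hz, h]; norm_num

/-- From the similarity equation on injective tuples, every edge has `γ`-product `-1`
(when all `γ` values are `±1`). -/
lemma edge_prod {W : Type*} [Fintype W] [DecidableEq W] (k : ℕ)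
    (hk : 2 ≤ k) (hkeven : Even k)
    (E : Finset (Finset W)) (hunif : ∀ e ∈ E, e.card = k)
    (gamma : W → ℂ) (hpm : ∀ w, gamma w = 1 ∨ gamma w = -1)
    (heq : ∀ t : Fin k → W, Function.Injective t →
        -(adjEnt k E t) =
          (gamma (t ⟨0, lt_of_lt_of_le two_pos hk⟩))⁻¹ ^ (k - 1) *
            (adjEnt k E t *
              ∏ i ∈ Finset.univ.erase (⟨0, lt_of_lt_of_le two_pos hk⟩ : Fin k), gamma (t i)))
    {e : Finset W} (he : e ∈ E) :
    ∏ w ∈ e, gamma w = -1 := by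
  have hcard : e.card = k := hunif e he
  set t : Fin k → W := fun i => ((e.equivFinOfCardEq hcard).symm i : W) with ht
  have ht_inj : Function.Injective t := by
    intro i j hij
    exact (e.equivFinOfCardEq hcard).symm.injective (Subtype.ext hij)
  have ht_img : Finset.image t Finset.univ = e := by
    apply Finset.eq_of_subset_of_card_le
    · intro w hw
      simp only [Finset.mem_image] at hw
      obtain ⟨i, -, rfl⟩ := hw
      exact ((e.equivFinOfCardEq hcard).symm i).2
    · rw [Finset.card_image_of_injective _ ht_inj, Finset.card_univ, Fintype.card_fin, hcard]
  have ha : adjEnt k E t = ((Nat.factorial (k - 1) : ℂ))⁻¹ := by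
    rw [adjEnt, if_pos ⟨ht_inj, by rw [ht_img]; exact he⟩]
  have ha0 : ((Nat.factorial (k - 1) : ℂ))⁻¹ ≠ 0 := by
    apply inv_ne_zero
    exact_mod_cast Nat.cast_ne_zero.mpr (Nat.factorial_ne_zero _)
  set i0 : Fin k := ⟨0, lt_of_lt_of_le two_pos hk⟩ with hi0
  have hkodd : Odd (k - 1) := Nat.Even.sub_odd (by omega) hkeven odd_one
  have hc : (gamma (t i0))⁻¹ ^ (k - 1) = gamma (t i0) := by
    rcases hpm (t i0) with h | h <;> rw [h]
    · simp
    · rw [inv_neg, inv_one, hkodd.neg_one_pow]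
  have heq' := heq t ht_inj
  rw [ha, hc] at heq'
  set P := ∏ i ∈ Finset.univ.erase i0, gamma (t i) with hP
  have hgp : gamma (t i0) * P = -1 := by
    have h2 : ((Nat.factorial (k - 1) : ℂ))⁻¹ * (gamma (t i0) * P)
        = ((Nat.factorial (k - 1) : ℂ))⁻¹ * (-1) := by
      rw [mul_neg_one]
      rw [← neg_eq_iff_eq_neg]
      calc -(((Nat.factorial (k - 1) : ℂ))⁻¹ * (gamma (t i0) * P))
          = -(gamma (t i0) * (((Nat.factorial (k - 1) : ℂ))⁻¹ * P)) := by ring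
        _ = ((Nat.factorial (k - 1) : ℂ))⁻¹ := by rw [← heq']; ring
    exact mul_left_cancel₀ ha0 h2
  calc ∏ w ∈ e, gamma w = ∏ i : Fin k, gamma (t i) := by
        rw [← ht_img, Finset.prod_image (fun x _ y _ h => ht_inj h)]
    _ = gamma (t i0) * P := by
        rw [hP, Finset.mul_prod_erase Finset.univ (fun i => gamma (t i)) (Finset.mem_univ i0)]
    _ = -1 := hgp

/-- If all `γ` values are `±1` and every edge has `γ`-product `-1`, the hypergraph is
odd-bipartite. -/
lemma odd_bipartite_of_prod {W : Type*} [Fintype W] [DecidableEq W] (k : ℕ)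
    (hk : 2 ≤ k) (hkeven : Even k)
    (E : Finset (Finset W)) (hunif : ∀ e ∈ E, e.card = k) (hedge : E.Nonempty)
    (gamma : W → ℂ) (hpm : ∀ w, gamma w = 1 ∨ gamma w = -1)
    (hprod : ∀ e ∈ E, ∏ w ∈ e, gamma w = -1) :
    ∃ W₁ : Finset W, W₁.Nonempty ∧ W₁ᶜ.Nonempty ∧ ∀ e ∈ E, Odd (e ∩ W₁).card := by
  set W₁ : Finset W := Finset.univ.filter (fun w => gamma w = -1) with hW₁
  have hodd : ∀ e ∈ E, Odd (e ∩ W₁).card := by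
    intro e he
    have hsplit : e ∩ W₁ = e.filter (fun w => gamma w = -1) := by
      ext w; simp [hW₁]
    have hprode : ∏ w ∈ e, gamma w
        = (∏ w ∈ e.filter (fun w => gamma w = -1), gamma w)
          * ∏ w ∈ e.filter (fun w => ¬ gamma w = -1), gamma w :=
      (Finset.prod_filter_mul_prod_filter_not e _ _).symm
    have h1 : ∏ w ∈ e.filter (fun w => gamma w = -1), gamma w
        = (-1 : ℂ) ^ (e ∩ W₁).card := by
      rw [hsplit, ← Finset.prod_const]
      exact Finset.prod_congr rfl (fun w hw => (Finset.mem_filter.mp hw).2)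
    have h2 : ∏ w ∈ e.filter (fun w => ¬ gamma w = -1), gamma w = 1 := by
      apply Finset.prod_eq_one
      intro w hw
      rcases hpm w with h | h
      · exact h
      · exact absurd h (Finset.mem_filter.mp hw).2
    have hpow : (-1 : ℂ) ^ (e ∩ W₁).card = -1 := by
      have hp := hprod e he
      rw [hprode, h1, h2, mul_one] at hp
      exact hp
    rcases Nat.even_or_odd (e ∩ W₁).card with hev | hod
    · rw [hev.neg_one_pow] at hpow; norm_num at hpow
    · exact hod
  obtain ⟨e, he⟩ := hedge
  have hoe := hodd e he
  refine ⟨W₁, ?_, ?_, hodd⟩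
  · obtain ⟨w, hw⟩ := Finset.card_pos.mp hoe.pos
    exact ⟨w, (Finset.mem_inter.mp hw).2⟩
  · have hne : e ∩ W₁ ≠ e := by
      intro h
      have := hunif e he
      rw [h, this] at hoe
      exact (Nat.not_even_iff_odd.mpr hoe) hkeven
    obtain ⟨w, hwe, hwn⟩ := Finset.exists_of_ssubset
      (lt_of_le_of_ne Finset.inter_subset_left hne)
    refine ⟨w, Finset.mem_compl.mpr (fun hwW => hwn (Finset.mem_inter.mpr ⟨hwe, hwW⟩))⟩

/-- Let `k` be even and `H` a connected `k`-uniform hypergraph with at least one edge that is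
not odd-bipartite.  Any unit-modulus diagonal similarity `γ` taking `Q(H)` to `L(H)`, or taking
`A(H)` to `−A(H)`, is necessarily non-real: `γ_w ∉ ℝ` for some vertex `w`. -/
theorem stmt16 {W : Type*} [Fintype W] [DecidableEq W] (k : ℕ)
    (hk : 2 ≤ k) (hkeven : Even k)
    (E : Finset (Finset W)) (hunif : ∀ e ∈ E, e.card = k) (hedge : E.Nonempty)
    (hconn : ∀ a b : W,
      Relation.ReflTransGen (fun p q => ∃ e ∈ E, p ∈ e ∧ q ∈ e) a b)
    (hnob : ¬ ∃ W₁ : Finset W, W₁.Nonempty ∧ W₁ᶜ.Nonempty ∧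
      ∀ e ∈ E, Odd (e ∩ W₁).card)
    (gamma : W → ℂ) (hmod : ∀ w, ‖gamma w‖ = 1) :
    ((∀ t : Fin k → W,
        diagEnt k E t - adjEnt k E t =
          (gamma (t ⟨0, by omega⟩))⁻¹ ^ (k - 1) *
            ((diagEnt k E t + adjEnt k E t) *
              ∏ i ∈ Finset.univ.erase (⟨0, by omega⟩ : Fin k), gamma (t i))) →
      ∃ w : W, (gamma w).im ≠ 0) ∧
    ((∀ t : Fin k → W,
        -(adjEnt k E t) =
          (gamma (t ⟨0, by omega⟩))⁻¹ ^ (k - 1) *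
            (adjEnt k E t *
              ∏ i ∈ Finset.univ.erase (⟨0, by omega⟩ : Fin k), gamma (t i))) →
      ∃ w : W, (gamma w).im ≠ 0) := by
  have key : ∀ (heq : ∀ t : Fin k → W, Function.Injective t →
        -(adjEnt k E t) =
          (gamma (t ⟨0, by omega⟩))⁻¹ ^ (k - 1) *
            (adjEnt k E t *
              ∏ i ∈ Finset.univ.erase (⟨0, by omega⟩ : Fin k), gamma (t i))),
      ∃ w : W, (gamma w).im ≠ 0 := by
    intro heq
    by_contra h
    push_neg at h
    have hpm : ∀ w, gamma w = 1 ∨ gamma w = -1 :=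
      fun w => pm_of_real_unit _ (hmod w) (h w)
    exact hnob (odd_bipartite_of_prod k hk hkeven E hunif hedge gamma hpm
      (fun e he => edge_prod k hk hkeven E hunif gamma hpm heq he))
  constructor
  · intro heq
    apply key
    intro t ht_inj
    have hd : diagEnt k E t = 0 := by
      rw [diagEnt, dif_neg]
      rintro ⟨w, hw⟩
      have h01 : (⟨0, by omega⟩ : Fin k) ≠ ⟨1, by omega⟩ := by
        intro h; exact absurd (Fin.mk.injEq .. ▸ h) (by simp)
      exact h01 (ht_inj (((hw _).trans (hw _).symm)))
    have := heq t
    rw [hd] at this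
    rw [zero_sub, zero_add] at this
    exact this
  · intro heq
    exact key (fun t _ => heq t)
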